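/- Let G be a finite 3-regular simple graph and e = uv an edge of G. Let G' be the graph obtained from G by deleting the edge e and adding three new vertices v', v'', v''' together with the edges vv', v'v'', and v'v'''. Then reg(G') = 3 if and only if the graph G − e (G with the edge e removed) has a proper edge coloring with 3 colors. -/

import Mathlib

open SimpleGraph

variable {V : Type*}

/-- The number of edges of the edge set `F` incident with the vertex `v`. -/
noncomputable def edgeDeg (F : Set (Sym2 V)) (v : V) : ℕ := {e ∈ F | v ∈ e}.ncard

/-- The subgraph induced by the edge set `F` (on the vertices incident with edges of `F`)
is `r`-regular: every vertex incident with an edge of `F` lies on exactly `r` edges of `F`. -/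
def IsRegularEdgeSet (F : Set (Sym2 V)) (r : ℕ) : Prop :=
  ∀ v : V, (∃ e ∈ F, v ∈ e) → edgeDeg F v = r

/-- `P` is a partition of the edge set of `G` into `t` nonempty parts, each of which
induces a regular subgraph. -/
def IsRegularPartition (G : SimpleGraph V) {t : ℕ} (P : Fin t → Set (Sym2 V)) : Prop :=
  (∀ i, (P i).Nonempty) ∧ (∀ i j, i ≠ j → Disjoint (P i) (P j)) ∧
    (⋃ i, P i) = G.edgeSet ∧ ∀ i, ∃ r, IsRegularEdgeSet (P i) r

/-- The regular number of `G`: the minimum number of parts in a partition of the edge set of `G`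
into nonempty subsets each of which induces a regular subgraph. -/
noncomputable def regNum (G : SimpleGraph V) : ℕ :=
  sInf {t | ∃ P : Fin t → Set (Sym2 V), IsRegularPartition G P}

/-- `C` is a proper edge coloring of `G` with `n` colors: edges sharing a vertex get
distinct colors. -/
def IsProperEdgeColoring (G : SimpleGraph V) {n : ℕ} (C : Sym2 V → Fin n) : Prop :=
  ∀ e₁ ∈ G.edgeSet, ∀ e₂ ∈ G.edgeSet, e₁ ≠ e₂ → (∃ x, x ∈ e₁ ∧ x ∈ e₂) → C e₁ ≠ C e₂

/-- The edge chromatic number of `G`: the minimum number of colors of a proper edge coloring. -/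
noncomputable def edgeChromNum (G : SimpleGraph V) : ℕ :=
  sInf {n | ∃ C : Sym2 V → Fin n, IsProperEdgeColoring G C}

/-- The graph `G'` obtained from `G` by deleting the edge `uv` and adding three new
vertices `v' = Sum.inr 0`, `v'' = Sum.inr 1`, `v''' = Sum.inr 2` together with the edges
`v v'`, `v' v''` and `v' v'''`. -/
def modifiedGraph (G : SimpleGraph V) (u v : V) : SimpleGraph (V ⊕ Fin 3) :=
  SimpleGraph.fromRel (fun p q =>
    match p, q with
    | Sum.inl a, Sum.inl b => G.Adj a b ∧ s(a, b) ≠ s(u, v)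
    | Sum.inl a, Sum.inr c => a = v ∧ c = 0
    | Sum.inr c, Sum.inr d => c = 0 ∧ d ≠ 0
    | _, _ => False)

lemma edgeDeg_eq_one {F : Set (Sym2 V)} {w : V} {a : Sym2 V}
    (ha : a ∈ F) (hw : w ∈ a) (h : ∀ b ∈ F, w ∈ b → b = a) : edgeDeg F w = 1 := by
  have hs : {e ∈ F | w ∈ e} = {a} := by
    apply subset_antisymm
    · rintro b ⟨hb, hwb⟩; exact h b hb hwb
    · rintro b rfl; exact ⟨ha, hw⟩
  simp [edgeDeg, hs]

lemma two_le_edgeDeg [Finite V] {F : Set (Sym2 V)} {w : V} {a b : Sym2 V} (ha : a ∈ F)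
    (hb : b ∈ F) (hwa : w ∈ a) (hwb : w ∈ b) (hab : a ≠ b) : 2 ≤ edgeDeg F w := by
  have hsub : ({a, b} : Set (Sym2 V)) ⊆ {e ∈ F | w ∈ e} := by
    rintro x (rfl | rfl)
    exacts [⟨ha, hwa⟩, ⟨hb, hwb⟩]
  calc 2 = ({a, b} : Set (Sym2 V)).ncard := (Set.ncard_pair hab).symm
    _ ≤ _ := Set.ncard_le_ncard hsub (Set.toFinite _)

lemma isRegular_one_of_pairwise {F : Set (Sym2 V)}
    (h : ∀ a ∈ F, ∀ b ∈ F, (∃ w, w ∈ a ∧ w ∈ b) → a = b) : IsRegularEdgeSet F 1 := by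
  rintro w ⟨e, he, hwe⟩
  exact edgeDeg_eq_one he hwe (fun b hb hwb => h b hb e he ⟨w, hwb, hwe⟩)

lemma eq_of_one_regular [Finite V] {F : Set (Sym2 V)} (h1 : IsRegularEdgeSet F 1)
    {a b : Sym2 V} (ha : a ∈ F) (hb : b ∈ F) {w : V} (hwa : w ∈ a) (hwb : w ∈ b) : a = b := by
  by_contra hne
  have h2 := two_le_edgeDeg ha hb hwa hwb hne
  rw [h1 w ⟨a, ha, hwa⟩] at h2; omega


lemma adj_ll (G : SimpleGraph V) (u v a b : V) :
    (modifiedGraph G u v).Adj (Sum.inl a) (Sum.inl b) ↔ G.Adj a b ∧ s(a, b) ≠ s(u, v) := by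
  simp only [modifiedGraph, SimpleGraph.fromRel_adj, ne_eq, Sum.inl.injEq]
  constructor
  · rintro ⟨hne, ⟨h1, h2⟩ | ⟨h1, h2⟩⟩
    · exact ⟨h1, h2⟩
    · exact ⟨h1.symm, by rwa [Sym2.eq_swap (a := a)]⟩
  · rintro ⟨h1, h2⟩
    exact ⟨h1.ne, Or.inl ⟨h1, h2⟩⟩

lemma adj_lr (G : SimpleGraph V) (u v : V) (a : V) (c : Fin 3) :
    (modifiedGraph G u v).Adj (Sum.inl a) (Sum.inr c) ↔ a = v ∧ c = 0 := by
  simp only [modifiedGraph, SimpleGraph.fromRel_adj]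
  constructor
  · rintro ⟨hne, ⟨h1, h2⟩ | h⟩
    · exact ⟨h1, h2⟩
    · exact absurd h (by simp)
  · rintro ⟨rfl, rfl⟩
    exact ⟨by simp, Or.inl ⟨rfl, rfl⟩⟩

lemma adj_rr (G : SimpleGraph V) (u v : V) (c d : Fin 3) :
    (modifiedGraph G u v).Adj (Sum.inr c) (Sum.inr d) ↔
      (c = 0 ∧ d ≠ 0) ∨ (d = 0 ∧ c ≠ 0) := by
  simp only [modifiedGraph, SimpleGraph.fromRel_adj, ne_eq, Sum.inr.injEq]
  constructor
  · rintro ⟨hne, h⟩; exact h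
  · rintro (⟨rfl, h⟩ | ⟨rfl, h⟩)
    · exact ⟨by simpa using (Ne.symm h), Or.inl ⟨rfl, h⟩⟩
    · exact ⟨by simpa using h, Or.inr ⟨rfl, h⟩⟩

lemma not_inr_mem_map (c : Fin 3) (y : Sym2 V) : (Sum.inr c : V ⊕ Fin 3) ∉ Sym2.map Sum.inl y := by
  induction y using Sym2.ind with
  | _ a b => simp [Sym2.mem_iff]

lemma mem_edgeSet_modifiedGraph (G : SimpleGraph V) (u v : V) (x : Sym2 (V ⊕ Fin 3)) :
    x ∈ (modifiedGraph G u v).edgeSet ↔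
      (∃ y ∈ (G.deleteEdges {s(u, v)}).edgeSet, x = Sym2.map Sum.inl y) ∨
      x = s(Sum.inl v, Sum.inr 0) ∨ x = s(Sum.inr 0, Sum.inr 1) ∨ x = s(Sum.inr 0, Sum.inr 2) := by
  constructor
  · intro h
    induction x using Sym2.ind with
    | _ p q =>
      rw [SimpleGraph.mem_edgeSet] at h
      rcases p with a | c <;> rcases q with b | d
      · rw [adj_ll] at h
        refine Or.inl ⟨s(a, b), ?_, by simp⟩
        simpa [SimpleGraph.deleteEdges_adj] using h
      · rw [adj_lr] at h
        obtain ⟨rfl, rfl⟩ := h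
        simp
      · rw [adj_comm, adj_lr] at h
        obtain ⟨rfl, rfl⟩ := h
        right; left; rw [Sym2.eq_swap]
      · rw [adj_rr] at h
        rcases h with ⟨rfl, h⟩ | ⟨rfl, h⟩
        · fin_cases d
          · simp at h
          · right; right; left; rfl
          · right; right; right; rfl
        · fin_cases c
          · simp at h
          · right; right; left; rw [Sym2.eq_swap]; rfl
          · right; right; right; rw [Sym2.eq_swap]; rfl
  · rintro (⟨y, hy, rfl⟩ | rfl | rfl | rfl)
    · induction y using Sym2.ind with
      | _ a b =>
        rw [SimpleGraph.mem_edgeSet, SimpleGraph.deleteEdges_adj] at hy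
        rw [Sym2.map_pair_eq, SimpleGraph.mem_edgeSet, adj_ll]
        exact ⟨hy.1, by simpa using hy.2⟩
    · rw [SimpleGraph.mem_edgeSet, adj_lr]; exact ⟨rfl, rfl⟩
    · rw [SimpleGraph.mem_edgeSet, adj_rr]; left; simp
    · rw [SimpleGraph.mem_edgeSet, adj_rr]; left; simp

lemma eq_E2_of_mem (G : SimpleGraph V) (u v : V) {x : Sym2 (V ⊕ Fin 3)}
    (hx : x ∈ (modifiedGraph G u v).edgeSet) (h1 : (Sum.inr 1 : V ⊕ Fin 3) ∈ x) :
    x = s(Sum.inr 0, Sum.inr 1) := by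
  rcases (mem_edgeSet_modifiedGraph G u v x).1 hx with ⟨y, _, rfl⟩ | rfl | rfl | rfl
  · exact absurd h1 (not_inr_mem_map 1 y)
  · simp [Sym2.mem_iff] at h1
  · rfl
  · simp [Sym2.mem_iff, Fin.ext_iff] at h1

lemma eq_E3_of_mem (G : SimpleGraph V) (u v : V) {x : Sym2 (V ⊕ Fin 3)}
    (hx : x ∈ (modifiedGraph G u v).edgeSet) (h1 : (Sum.inr 2 : V ⊕ Fin 3) ∈ x) :
    x = s(Sum.inr 0, Sum.inr 2) := by
  rcases (mem_edgeSet_modifiedGraph G u v x).1 hx with ⟨y, _, rfl⟩ | rfl | rfl | rfl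
  · exact absurd h1 (not_inr_mem_map 2 y)
  · simp [Sym2.mem_iff] at h1
  · simp [Sym2.mem_iff, Fin.ext_iff] at h1
  · rfl

lemma mem_E123_of_mem (G : SimpleGraph V) (u v : V) {x : Sym2 (V ⊕ Fin 3)}
    (hx : x ∈ (modifiedGraph G u v).edgeSet) (h1 : (Sum.inr 0 : V ⊕ Fin 3) ∈ x) :
    x = s(Sum.inl v, Sum.inr 0) ∨ x = s(Sum.inr 0, Sum.inr 1) ∨ x = s(Sum.inr 0, Sum.inr 2) := by
  rcases (mem_edgeSet_modifiedGraph G u v x).1 hx with ⟨y, _, rfl⟩ | rfl | rfl | rfl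
  · exact absurd h1 (not_inr_mem_map 0 y)
  · exact Or.inl rfl
  · exact Or.inr (Or.inl rfl)
  · exact Or.inr (Or.inr rfl)

lemma E1_ne_E2 (v : V) : s(Sum.inl v, (Sum.inr 0 : V ⊕ Fin 3)) ≠ s(Sum.inr 0, Sum.inr 1) := by
  simp [Sym2.eq_iff]
lemma E1_ne_E3 (v : V) : s(Sum.inl v, (Sum.inr 0 : V ⊕ Fin 3)) ≠ s(Sum.inr 0, Sum.inr 2) := by
  simp [Sym2.eq_iff]
lemma E2_ne_E3 : s((Sum.inr 0 : V ⊕ Fin 3), Sum.inr 1) ≠ s(Sum.inr 0, Sum.inr 2) := by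
  simp [Sym2.eq_iff]


lemma mem_edgeSet_of_mem_part {t : ℕ} {H : SimpleGraph (V ⊕ Fin 3)}
    {P : Fin t → Set (Sym2 (V ⊕ Fin 3))} (hun : (⋃ i, P i) = H.edgeSet) {i : Fin t}
    {x : Sym2 (V ⊕ Fin 3)} (hx : x ∈ P i) : x ∈ H.edgeSet := by
  rw [← hun]; exact Set.mem_iUnion.2 ⟨i, hx⟩

lemma regularPartition_structure [Fintype V] (G : SimpleGraph V) (u v : V) {t : ℕ}
    {P : Fin t → Set (Sym2 (V ⊕ Fin 3))} (hP : IsRegularPartition (modifiedGraph G u v) P) :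
    ∃ i1 i2 i3 : Fin t,
      s(Sum.inl v, Sum.inr 0) ∈ P i1 ∧ s(Sum.inr 0, Sum.inr 1) ∈ P i2 ∧
      s(Sum.inr 0, Sum.inr 2) ∈ P i3 ∧ i1 ≠ i2 ∧ i1 ≠ i3 ∧ i2 ≠ i3 ∧
      IsRegularEdgeSet (P i1) 1 ∧ IsRegularEdgeSet (P i2) 1 ∧ IsRegularEdgeSet (P i3) 1 := by
  obtain ⟨hne, hdisj, hun, hregp⟩ := hP
  have hE1 : s(Sum.inl v, (Sum.inr 0 : V ⊕ Fin 3)) ∈ (modifiedGraph G u v).edgeSet :=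
    (mem_edgeSet_modifiedGraph G u v _).2 (Or.inr (Or.inl rfl))
  have hE2 : s((Sum.inr 0 : V ⊕ Fin 3), Sum.inr 1) ∈ (modifiedGraph G u v).edgeSet :=
    (mem_edgeSet_modifiedGraph G u v _).2 (Or.inr (Or.inr (Or.inl rfl)))
  have hE3 : s((Sum.inr 0 : V ⊕ Fin 3), Sum.inr 2) ∈ (modifiedGraph G u v).edgeSet :=
    (mem_edgeSet_modifiedGraph G u v _).2 (Or.inr (Or.inr (Or.inr rfl)))
  obtain ⟨i1, hi1⟩ := Set.mem_iUnion.1 (hun ▸ hE1)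
  obtain ⟨i2, hi2⟩ := Set.mem_iUnion.1 (hun ▸ hE2)
  obtain ⟨i3, hi3⟩ := Set.mem_iUnion.1 (hun ▸ hE3)
  have m1a : (Sum.inl v : V ⊕ Fin 3) ∈ s(Sum.inl v, (Sum.inr 0 : V ⊕ Fin 3)) := by
    simp [Sym2.mem_iff]
  have m1b : (Sum.inr 0 : V ⊕ Fin 3) ∈ s(Sum.inl v, (Sum.inr 0 : V ⊕ Fin 3)) := by
    simp [Sym2.mem_iff]
  have m2a : (Sum.inr 0 : V ⊕ Fin 3) ∈ s((Sum.inr 0 : V ⊕ Fin 3), Sum.inr 1) := by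
    simp [Sym2.mem_iff]
  have m2b : (Sum.inr 1 : V ⊕ Fin 3) ∈ s((Sum.inr 0 : V ⊕ Fin 3), Sum.inr 1) := by
    simp [Sym2.mem_iff]
  have m3a : (Sum.inr 0 : V ⊕ Fin 3) ∈ s((Sum.inr 0 : V ⊕ Fin 3), Sum.inr 2) := by
    simp [Sym2.mem_iff]
  have m3b : (Sum.inr 2 : V ⊕ Fin 3) ∈ s((Sum.inr 0 : V ⊕ Fin 3), Sum.inr 2) := by
    simp [Sym2.mem_iff]
  -- P i2 is 1-regular
  have hreg2 : IsRegularEdgeSet (P i2) 1 := by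
    obtain ⟨r, hr⟩ := hregp i2
    have hd : edgeDeg (P i2) (Sum.inr 1) = 1 :=
      edgeDeg_eq_one hi2 m2b (fun b hb hwb =>
        eq_E2_of_mem G u v (mem_edgeSet_of_mem_part hun hb) hwb)
    have : r = 1 := by rw [← hr (Sum.inr 1) ⟨_, hi2, m2b⟩, hd]
    rwa [this] at hr
  have hreg3 : IsRegularEdgeSet (P i3) 1 := by
    obtain ⟨r, hr⟩ := hregp i3
    have hd : edgeDeg (P i3) (Sum.inr 2) = 1 :=
      edgeDeg_eq_one hi3 m3b (fun b hb hwb =>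
        eq_E3_of_mem G u v (mem_edgeSet_of_mem_part hun hb) hwb)
    have : r = 1 := by rw [← hr (Sum.inr 2) ⟨_, hi3, m3b⟩, hd]
    rwa [this] at hr
  have h23 : i2 ≠ i3 := by
    rintro rfl
    exact E2_ne_E3 (eq_of_one_regular hreg2 hi2 hi3 m2a m3a)
  have h12 : i1 ≠ i2 := by
    rintro rfl
    exact E1_ne_E2 v (eq_of_one_regular hreg2 hi1 hi2 m1b m2a)
  have h13 : i1 ≠ i3 := by
    rintro rfl
    exact E1_ne_E3 v (eq_of_one_regular hreg3 hi1 hi3 m1b m3a)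
  have hreg1 : IsRegularEdgeSet (P i1) 1 := by
    obtain ⟨r, hr⟩ := hregp i1
    have hd : edgeDeg (P i1) (Sum.inr 0) = 1 := by
      refine edgeDeg_eq_one hi1 m1b (fun b hb hwb => ?_)
      rcases mem_E123_of_mem G u v (mem_edgeSet_of_mem_part hun hb) hwb with rfl | rfl | rfl
      · rfl
      · exact absurd hi2 (Set.disjoint_left.1 (hdisj i1 i2 h12) hb)
      · exact absurd hi3 (Set.disjoint_left.1 (hdisj i1 i3 h13) hb)
    have : r = 1 := by rw [← hr (Sum.inr 0) ⟨_, hi1, m1b⟩, hd]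
    rwa [this] at hr
  exact ⟨i1, i2, i3, hi1, hi2, hi3, h12, h13, h23, hreg1, hreg2, hreg3⟩

lemma three_le_of_partition [Fintype V] (G : SimpleGraph V) (u v : V) {t : ℕ}
    {P : Fin t → Set (Sym2 (V ⊕ Fin 3))} (hP : IsRegularPartition (modifiedGraph G u v) P) :
    3 ≤ t := by
  obtain ⟨i1, i2, i3, _, _, _, h12, h13, h23, -⟩ := regularPartition_structure G u v hP
  have hc : ({i1, i2, i3} : Finset (Fin t)).card = 3 := by
    rw [Finset.card_insert_of_notMem (by simp [h12, h13]),
      Finset.card_insert_of_notMem (by simp [h23]), Finset.card_singleton]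
  calc 3 = ({i1, i2, i3} : Finset (Fin t)).card := hc.symm
    _ ≤ Fintype.card (Fin t) := Finset.card_le_univ _
    _ = t := Fintype.card_fin t

lemma coloring_of_partition [Fintype V] (G : SimpleGraph V) (u v : V)
    {P : Fin 3 → Set (Sym2 (V ⊕ Fin 3))} (hP : IsRegularPartition (modifiedGraph G u v) P) :
    ∃ C : Sym2 V → Fin 3, IsProperEdgeColoring (G.deleteEdges {s(u, v)}) C := by
  classical
  obtain ⟨i1, i2, i3, hi1, hi2, hi3, h12, h13, h23, hreg1, hreg2, hreg3⟩ :=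
    regularPartition_structure G u v hP
  obtain ⟨-, -, hun, -⟩ := hP
  have hall : ∀ i : Fin 3, IsRegularEdgeSet (P i) 1 := by
    have huniv : ({i1, i2, i3} : Finset (Fin 3)) = Finset.univ := by
      apply Finset.eq_univ_of_card
      rw [Finset.card_insert_of_notMem (by simp [h12, h13]),
        Finset.card_insert_of_notMem (by simp [h23]), Finset.card_singleton]
      rfl
    intro i
    have hi : i ∈ ({i1, i2, i3} : Finset (Fin 3)) := huniv ▸ Finset.mem_univ i
    simp only [Finset.mem_insert, Finset.mem_singleton] at hi
    rcases hi with rfl | rfl | rfl <;> assumption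
  have hmem : ∀ y ∈ (G.deleteEdges {s(u, v)}).edgeSet,
      ∃ i : Fin 3, Sym2.map Sum.inl y ∈ P i := by
    intro y hy
    have : Sym2.map Sum.inl y ∈ (modifiedGraph G u v).edgeSet :=
      (mem_edgeSet_modifiedGraph G u v _).2 (Or.inl ⟨y, hy, rfl⟩)
    exact Set.mem_iUnion.1 (hun ▸ this)
  refine ⟨fun x => if h : ∃ i : Fin 3, Sym2.map Sum.inl x ∈ P i then h.choose else 0, ?_⟩
  intro e₁ he₁ e₂ he₂ hne ⟨x, hx1, hx2⟩ hCeq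
  have h1 := hmem e₁ he₁
  have h2 := hmem e₂ he₂
  simp only [] at hCeq
  rw [dif_pos h1, dif_pos h2] at hCeq
  have hm1 : Sym2.map Sum.inl e₁ ∈ P h1.choose := h1.choose_spec
  have hm2 : Sym2.map Sum.inl e₂ ∈ P h1.choose := hCeq ▸ h2.choose_spec
  have hmne : Sym2.map (Sum.inl : V → V ⊕ Fin 3) e₁ ≠ Sym2.map Sum.inl e₂ :=
    fun h => hne (Sym2.map.injective (Sum.inl_injective (β := Fin 3)) h)
  have hw1 : (Sum.inl x : V ⊕ Fin 3) ∈ Sym2.map Sum.inl e₁ := Sym2.mem_map.2 ⟨x, hx1, rfl⟩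
  have hw2 : (Sum.inl x : V ⊕ Fin 3) ∈ Sym2.map Sum.inl e₂ := Sym2.mem_map.2 ⟨x, hx2, rfl⟩
  exact hmne (eq_of_one_regular (hall h1.choose) hm1 hm2 hw1 hw2)

lemma inr_zero_mem_vec (v : V) (k : Fin 3) :
    (Sum.inr 0 : V ⊕ Fin 3) ∈
      ![s(Sum.inl v, Sum.inr 0), s(Sum.inr 0, Sum.inr 1), s(Sum.inr 0, Sum.inr 2)] k := by
  fin_cases k <;> simp [Sym2.mem_iff]

lemma vec_injective (v : V) :
    Function.Injective
      ![s(Sum.inl v, (Sum.inr 0 : V ⊕ Fin 3)), s(Sum.inr 0, Sum.inr 1), s(Sum.inr 0, Sum.inr 2)] := by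
  intro a b hab
  fin_cases a <;> fin_cases b <;>
    simp only [Matrix.cons_val_zero, Matrix.cons_val_one, Matrix.head_cons,
      Matrix.cons_val_two, Matrix.tail_cons] at hab <;>
    first
      | rfl
      | exact absurd hab (E1_ne_E2 v)
      | exact absurd hab (E1_ne_E3 v)
      | exact absurd hab E2_ne_E3
      | exact absurd hab.symm (E1_ne_E2 v)
      | exact absurd hab.symm (E1_ne_E3 v)
      | exact absurd hab.symm E2_ne_E3

lemma vec_mem_edgeSet (G : SimpleGraph V) (u v : V) (k : Fin 3) :
    ![s(Sum.inl v, Sum.inr 0), s(Sum.inr 0, Sum.inr 1), s(Sum.inr 0, Sum.inr 2)] k ∈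
      (modifiedGraph G u v).edgeSet := by
  fin_cases k
  · exact (mem_edgeSet_modifiedGraph G u v _).2 (Or.inr (Or.inl rfl))
  · exact (mem_edgeSet_modifiedGraph G u v _).2 (Or.inr (Or.inr (Or.inl rfl)))
  · exact (mem_edgeSet_modifiedGraph G u v _).2 (Or.inr (Or.inr (Or.inr rfl)))

lemma inl_mem_vec {p v : V} {k : Fin 3}
    (h : (Sum.inl p : V ⊕ Fin 3) ∈
      ![s(Sum.inl v, Sum.inr 0), s(Sum.inr 0, Sum.inr 1), s(Sum.inr 0, Sum.inr 2)] k) :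
    k = 0 ∧ p = v := by
  fin_cases k <;> simp [Sym2.mem_iff] at h ⊢
  exact h

lemma partition_of_coloring [Fintype V] (G : SimpleGraph V) [DecidableRel G.Adj]
    (hreg : G.IsRegularOfDegree 3) (u v : V) (huv : G.Adj u v)
    {C : Sym2 V → Fin 3} (hC : IsProperEdgeColoring (G.deleteEdges {s(u, v)}) C) :
    ∃ P : Fin 3 → Set (Sym2 (V ⊕ Fin 3)), IsRegularPartition (modifiedGraph G u v) P := by
  classical
  set H := G.deleteEdges {s(u, v)} with hH
  set S : Set (Sym2 V) := {x | x ∈ H.edgeSet ∧ v ∈ x} with hSdef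
  -- there is a color unused at v
  have hS2 : S.ncard ≤ 2 := by
    have hSsub : S ⊆ G.incidenceSet v \ {s(u, v)} := by
      rintro x ⟨hx, hvx⟩
      rw [hH, SimpleGraph.edgeSet_deleteEdges] at hx
      exact ⟨⟨hx.1, hvx⟩, hx.2⟩
    have hI : (G.incidenceSet v).ncard = 3 := by
      rw [Set.ncard_eq_toFinset_card', Set.toFinset_card, G.card_incidenceSet_eq_degree]
      exact hreg v
    have hmemI : s(u, v) ∈ G.incidenceSet v :=
      ⟨G.mem_edgeSet.2 huv, by simp [Sym2.mem_iff]⟩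
    have hd : (G.incidenceSet v \ {s(u, v)}).ncard = 2 := by
      rw [Set.ncard_diff_singleton_of_mem hmemI, hI]
    calc S.ncard ≤ _ := Set.ncard_le_ncard hSsub (Set.toFinite _)
      _ = 2 := hd
  obtain ⟨i0, hi0⟩ : ∃ i0 : Fin 3, ∀ x ∈ S, C x ≠ i0 := by
    by_contra h'
    push_neg at h'
    have himg : C '' S = Set.univ :=
      Set.eq_univ_of_forall (fun i => by obtain ⟨x, hx, hcx⟩ := h' i; exact ⟨x, hx, hcx⟩)
    have : (3 : ℕ) ≤ 2 := by
      calc (3 : ℕ) = (Set.univ : Set (Fin 3)).ncard := by simp [Set.ncard_univ]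
        _ = (C '' S).ncard := by rw [himg]
        _ ≤ S.ncard := Set.ncard_image_le (Set.toFinite S)
        _ ≤ 2 := hS2
    omega
  set vec : Fin 3 → Sym2 (V ⊕ Fin 3) :=
    ![s(Sum.inl v, Sum.inr 0), s(Sum.inr 0, Sum.inr 1), s(Sum.inr 0, Sum.inr 2)] with hvec
  set σ : Equiv.Perm (Fin 3) := Equiv.swap 0 i0 with hσ
  set f : Fin 3 → Sym2 (V ⊕ Fin 3) := fun i => vec (σ i) with hf
  have hfinj : Function.Injective f := (vec_injective v).comp σ.injective
  have hfσ : ∀ k, f (σ k) = vec k := by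
    intro k
    rw [hf]
    simp only [hσ, Equiv.swap_apply_self]
  have hf0 : ∀ i, (Sum.inr 0 : V ⊕ Fin 3) ∈ f i := fun i => inr_zero_mem_vec v (σ i)
  have hσ0 : σ 0 = i0 := Equiv.swap_apply_left 0 i0
  set M : Fin 3 → Set (Sym2 (V ⊕ Fin 3)) :=
    fun i => Sym2.map Sum.inl '' {x | x ∈ H.edgeSet ∧ C x = i} with hM
  refine ⟨fun i => M i ∪ {f i}, ?_, ?_, ?_, ?_⟩
  · exact fun i => ⟨f i, Or.inr rfl⟩
  · intro i j hij
    rw [Set.disjoint_left]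
    rintro x (⟨y, hy, rfl⟩ | hx) hxj
    · rcases hxj with ⟨y', hy', hyy'⟩ | hx
      · have hyy : y' = y := Sym2.map.injective (Sum.inl_injective (β := Fin 3)) hyy'
        subst hyy
        exact hij (by rw [← hy.2, ← hy'.2])
      · rw [Set.mem_singleton_iff] at hx
        exact not_inr_mem_map 0 y (hx.symm ▸ hf0 j)
    · rw [Set.mem_singleton_iff] at hx
      subst hx
      rcases hxj with ⟨y, hy, hyy⟩ | hx
      · exact not_inr_mem_map 0 y (hyy ▸ hf0 i)
      · rw [Set.mem_singleton_iff] at hx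
        exact hij (hfinj hx)
  · apply subset_antisymm
    · rintro x hx
      obtain ⟨i, hi⟩ := Set.mem_iUnion.1 hx
      rcases hi with ⟨y, hy, rfl⟩ | hx'
      · exact (mem_edgeSet_modifiedGraph G u v _).2 (Or.inl ⟨y, hy.1, rfl⟩)
      · rw [Set.mem_singleton_iff] at hx'
        subst hx'
        exact vec_mem_edgeSet G u v (σ i)
    · intro x hx
      rcases (mem_edgeSet_modifiedGraph G u v x).1 hx with ⟨y, hy, rfl⟩ | rfl | rfl | rfl
      · exact Set.mem_iUnion.2 ⟨C y, Or.inl ⟨y, ⟨hy, rfl⟩, rfl⟩⟩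
      · exact Set.mem_iUnion.2 ⟨σ 0, Or.inr (by rw [Set.mem_singleton_iff, hfσ 0]; rfl)⟩
      · exact Set.mem_iUnion.2 ⟨σ 1, Or.inr (by rw [Set.mem_singleton_iff, hfσ 1]; rfl)⟩
      · exact Set.mem_iUnion.2 ⟨σ 2, Or.inr (by rw [Set.mem_singleton_iff, hfσ 2]; rfl)⟩
  · intro i
    refine ⟨1, isRegular_one_of_pairwise ?_⟩
    have key : ∀ y, y ∈ H.edgeSet ∧ C y = i → ∀ w, w ∈ Sym2.map Sum.inl y → w ∈ f i → False := by
      rintro y hy w hwa hwb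
      obtain ⟨p, hp, rfl⟩ := Sym2.mem_map.1 hwa
      obtain ⟨hk, rfl⟩ := inl_mem_vec hwb
      have hii0 : i = i0 := by
        have hi' : i = σ.symm 0 := by rw [← hk, Equiv.symm_apply_apply]
        rw [hi', hσ, Equiv.symm_swap, Equiv.swap_apply_left]
      exact hi0 y ⟨hy.1, hp⟩ (hii0 ▸ hy.2)
    rintro a (⟨y, hy, rfl⟩ | ha) b (⟨y', hy', rfl⟩ | hb) ⟨w, hwa, hwb⟩
    · obtain ⟨p, hp, rfl⟩ := Sym2.mem_map.1 hwa
      have hp' : p ∈ y' := by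
        obtain ⟨q, hq, hqe⟩ := Sym2.mem_map.1 hwb
        rwa [← Sum.inl_injective hqe]
      by_contra hne
      have hyne : y ≠ y' := fun h => hne (by rw [h])
      exact hC y hy.1 y' hy'.1 hyne ⟨p, hp, hp'⟩ (by rw [hy.2, hy'.2])
    · rw [Set.mem_singleton_iff] at hb; subst hb
      exact absurd (key y hy w hwa hwb) (by simp)
    · rw [Set.mem_singleton_iff] at ha; subst ha
      exact absurd (key y' hy' w hwb hwa) (by simp)
    · rw [Set.mem_singleton_iff] at ha hb
      rw [ha, hb]

/-- for a cubic graph `G` with an edge `uv`, the modified graph `G'`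
has regular number `3` iff `G - uv` has a proper edge coloring with `3` colors. -/
theorem regNum_modifiedGraph_eq_three_iff [Fintype V] (G : SimpleGraph V) [DecidableRel G.Adj]
    (hreg : G.IsRegularOfDegree 3) (u v : V) (huv : G.Adj u v) :
    regNum (modifiedGraph G u v) = 3 ↔
      ∃ C : Sym2 V → Fin 3, IsProperEdgeColoring (G.deleteEdges {s(u, v)}) C := by
  constructor
  · intro h
    unfold regNum at h
    have hS : {t | ∃ P : Fin t → Set (Sym2 (V ⊕ Fin 3)),
        IsRegularPartition (modifiedGraph G u v) P}.Nonempty := by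
      by_contra h'
      rw [Set.not_nonempty_iff_eq_empty] at h'
      rw [h', Nat.sInf_empty] at h
      omega
    have h3 := Nat.sInf_mem hS
    rw [h] at h3
    obtain ⟨P, hP⟩ := h3
    exact coloring_of_partition G u v hP
  · rintro ⟨C, hC⟩
    obtain ⟨P, hP⟩ := partition_of_coloring G hreg u v huv hC
    apply le_antisymm
    · exact Nat.sInf_le ⟨P, hP⟩
    · exact le_csInf ⟨3, P, hP⟩ (fun t ht => three_le_of_partition G u v ht.choose_spec)
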